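/- If P and Q are rank-one orthogonal projections in ℝ² onto unit vectors e and f respectively, and a, b ∈ (0,1], then writing Ω_e = diag(a⁻¹,a)·U_e where U_e is the rotation sending e to (1,0), one has log‖Ω_f Ω_e⁻¹‖ ≤ |log(a/b)| + C·log(1 + ‖P − Q‖/(a b)) for some absolute constant C. -/

import Mathlib

/-- Operator norm (on `ℓ²`) of a 2×2 real matrix. -/
noncomputable def opNormR (A : Matrix (Fin 2) (Fin 2) ℝ) : ℝ :=
  ‖Matrix.toEuclideanCLM (𝕜 := ℝ) (n := Fin 2) A‖

/-- The rotation matrix sending the unit vector of angle `φ` to `(1,0)`. -/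
noncomputable def rotTo (φ : ℝ) : Matrix (Fin 2) (Fin 2) ℝ :=
  !![Real.cos φ, Real.sin φ; -Real.sin φ, Real.cos φ]

/-- `Ω = diag(a⁻¹, a) · U_φ`. -/
noncomputable def omegaMat (a φ : ℝ) : Matrix (Fin 2) (Fin 2) ℝ :=
  !![a⁻¹, 0; 0, a] * rotTo φ

/-- The rank-one orthogonal projection onto the unit vector of angle `φ`. -/
noncomputable def projMat (φ : ℝ) : Matrix (Fin 2) (Fin 2) ℝ :=
  Matrix.vecMulVec ![Real.cos φ, Real.sin φ] ![Real.cos φ, Real.sin φ]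

lemma toECLM_apply (A : Matrix (Fin 2) (Fin 2) ℝ) (x : EuclideanSpace ℝ (Fin 2)) (i : Fin 2) :
    (Matrix.toEuclideanCLM (𝕜 := ℝ) (n := Fin 2) A x) i = A.mulVec (fun j => x j) i := by
  have h2 := congrFun (Matrix.ofLp_toEuclideanCLM (𝕜 := ℝ) A x) i
  simpa [Matrix.toLin'_apply] using h2

lemma opNormR_le (A : Matrix (Fin 2) (Fin 2) ℝ) (K : ℝ) (hK : 0 ≤ K)
    (h : ∀ v : Fin 2 → ℝ, (A.mulVec v 0)^2 + (A.mulVec v 1)^2 ≤ K^2 * (v 0 ^2 + v 1 ^2)) :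
    opNormR A ≤ K := by
  apply ContinuousLinearMap.opNorm_le_bound _ hK
  intro x
  have hx : ‖x‖ = Real.sqrt ((x 0)^2 + (x 1)^2) := by
    rw [EuclideanSpace.norm_eq]
    simp [Fin.sum_univ_two, sq_abs]
  have hAx : ‖Matrix.toEuclideanCLM (𝕜 := ℝ) (n := Fin 2) A x‖
      = Real.sqrt ((A.mulVec (fun j => x j) 0)^2 + (A.mulVec (fun j => x j) 1)^2) := by
    rw [EuclideanSpace.norm_eq]
    simp [Fin.sum_univ_two, sq_abs, toECLM_apply]
  rw [hx, hAx, ← Real.sqrt_sq hK, ← Real.sqrt_mul (by positivity)]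
  exact Real.sqrt_le_sqrt (h _)

lemma mulVec_le_opNormR (A : Matrix (Fin 2) (Fin 2) ℝ) (v : Fin 2 → ℝ) :
    Real.sqrt ((A.mulVec v 0)^2 + (A.mulVec v 1)^2)
      ≤ opNormR A * Real.sqrt ((v 0)^2 + (v 1)^2) := by
  have := (Matrix.toEuclideanCLM (𝕜 := ℝ) (n := Fin 2) A).le_opNorm
    ((WithLp.equiv 2 (Fin 2 → ℝ)).symm v)
  have hx : ‖((WithLp.equiv 2 (Fin 2 → ℝ)).symm v : EuclideanSpace ℝ (Fin 2))‖
      = Real.sqrt ((v 0)^2 + (v 1)^2) := by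
    rw [EuclideanSpace.norm_eq]; simp [Fin.sum_univ_two, sq_abs]
  have hAx : ‖Matrix.toEuclideanCLM (𝕜 := ℝ) (n := Fin 2) A
      ((WithLp.equiv 2 (Fin 2 → ℝ)).symm v)‖
      = Real.sqrt ((A.mulVec v 0)^2 + (A.mulVec v 1)^2) := by
    rw [EuclideanSpace.norm_eq]
    simp [Fin.sum_univ_two, sq_abs, toECLM_apply]
  rw [hx, hAx] at this
  exact this

lemma opNormR_diag_le (x y K : ℝ) (hx : |x| ≤ K) (hy : |y| ≤ K) :
    opNormR !![x, 0; 0, y] ≤ K := by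
  apply opNormR_le _ _ ((abs_nonneg x).trans hx)
  intro v
  have hmv0 : (!![x, 0; 0, y]).mulVec v 0 = x * v 0 := by
    simp [Matrix.mulVec, dotProduct, Fin.sum_univ_two]
  have hmv1 : (!![x, 0; 0, y]).mulVec v 1 = y * v 1 := by
    simp [Matrix.mulVec, dotProduct, Fin.sum_univ_two]
  rw [hmv0, hmv1]
  have h1 : x^2 ≤ K^2 := by nlinarith [abs_nonneg x, sq_abs x]
  have h2 : y^2 ≤ K^2 := by nlinarith [abs_nonneg y, sq_abs y]
  nlinarith [sq_nonneg (v 0), sq_nonneg (v 1)]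

lemma opNormR_antidiag_le (x y K : ℝ) (hx : |x| ≤ K) (hy : |y| ≤ K) :
    opNormR !![0, x; y, 0] ≤ K := by
  apply opNormR_le _ _ ((abs_nonneg x).trans hx)
  intro v
  have hmv0 : (!![0, x; y, 0]).mulVec v 0 = x * v 1 := by
    simp [Matrix.mulVec, dotProduct, Fin.sum_univ_two]
  have hmv1 : (!![0, x; y, 0]).mulVec v 1 = y * v 0 := by
    simp [Matrix.mulVec, dotProduct, Fin.sum_univ_two]
  rw [hmv0, hmv1]
  have h1 : x^2 ≤ K^2 := by nlinarith [abs_nonneg x, sq_abs x]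
  have h2 : y^2 ≤ K^2 := by nlinarith [abs_nonneg y, sq_abs y]
  nlinarith [sq_nonneg (v 0), sq_nonneg (v 1)]

lemma opNormR_add_le (A B : Matrix (Fin 2) (Fin 2) ℝ) :
    opNormR (A + B) ≤ opNormR A + opNormR B := by
  unfold opNormR
  rw [map_add]
  exact norm_add_le _ _

lemma omega_inv (a φ : ℝ) (ha : a ≠ 0) :
    (omegaMat a φ)⁻¹
      = !![Real.cos φ, -Real.sin φ; Real.sin φ, Real.cos φ] * !![a, 0; 0, a⁻¹] := by
  apply Matrix.inv_eq_right_inv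
  have h := Real.sin_sq_add_cos_sq φ
  have ha' : a * a⁻¹ = 1 := mul_inv_cancel₀ ha
  ext i j
  fin_cases i <;> fin_cases j <;>
    simp [omegaMat, rotTo, Matrix.mul_apply, Fin.sum_univ_two]
  all_goals first
    | ring1
    | linear_combination (a * a⁻¹) * h + ha'
    | linear_combination -((a * a⁻¹) * h + ha')

lemma M_eq (a b φ ψ : ℝ) (ha : a ≠ 0) (hb : b ≠ 0) :
    omegaMat b ψ * (omegaMat a φ)⁻¹ =
      !![(a/b) * Real.cos (ψ - φ), Real.sin (ψ - φ) / (a*b);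
         -((a*b) * Real.sin (ψ - φ)), (b/a) * Real.cos (ψ - φ)] := by
  rw [omega_inv a φ ha]
  ext i j
  fin_cases i <;> fin_cases j <;>
    simp [omegaMat, rotTo, Matrix.mul_apply, Fin.sum_univ_two,
      Real.cos_sub, Real.sin_sub]
  all_goals first
    | ring1
    | (field_simp; ring1)

lemma sin_le_proj_norm (φ ψ : ℝ) :
    |Real.sin (ψ - φ)| ≤ opNormR (projMat φ - projMat ψ) := by
  set D := projMat φ - projMat ψ with hD
  set v : Fin 2 → ℝ := ![Real.cos ψ, Real.sin ψ] with hv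
  have hφ := Real.sin_sq_add_cos_sq φ
  have hψ := Real.sin_sq_add_cos_sq ψ
  have key := mulVec_le_opNormR D v
  have hvnorm : Real.sqrt ((v 0)^2 + (v 1)^2) = 1 := by
    simp only [hv]
    rw [show (![Real.cos ψ, Real.sin ψ] : Fin 2 → ℝ) 0 = Real.cos ψ from rfl,
      show (![Real.cos ψ, Real.sin ψ] : Fin 2 → ℝ) 1 = Real.sin ψ from rfl]
    rw [show Real.cos ψ ^2 + Real.sin ψ ^2 = 1 by linarith]
    exact Real.sqrt_one
  have hDv : (D.mulVec v 0)^2 + (D.mulVec v 1)^2 = Real.sin (ψ - φ) ^ 2 := by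
    have h0 : D.mulVec v 0 =
        Real.cos φ * (Real.cos φ * Real.cos ψ + Real.sin φ * Real.sin ψ)
          - Real.cos ψ * (Real.cos ψ * Real.cos ψ + Real.sin ψ * Real.sin ψ) := by
      simp [hD, hv, projMat, Matrix.mulVec, dotProduct, Fin.sum_univ_two,
        Matrix.vecMulVec_apply, Matrix.sub_apply]
      ring
    have h1 : D.mulVec v 1 =
        Real.sin φ * (Real.cos φ * Real.cos ψ + Real.sin φ * Real.sin ψ)
          - Real.sin ψ * (Real.cos ψ * Real.cos ψ + Real.sin ψ * Real.sin ψ) := by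
      simp [hD, hv, projMat, Matrix.mulVec, dotProduct, Fin.sum_univ_two,
        Matrix.vecMulVec_apply, Matrix.sub_apply]
      ring
    rw [h0, h1, Real.sin_sub]
    linear_combination
      (((Real.cos φ * Real.cos ψ + Real.sin φ * Real.sin ψ))^2
        - (Real.sin ψ ^2 + Real.cos ψ ^2)) * hφ
      + (-2*((Real.cos φ * Real.cos ψ + Real.sin φ * Real.sin ψ))^2
        + (Real.sin ψ ^2 + Real.cos ψ ^2) * ((Real.sin ψ ^2 + Real.cos ψ ^2) + 1)) * hψ
  rw [hvnorm, mul_one, hDv, Real.sqrt_sq_eq_abs] at key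
  exact key

theorem log_opNorm_omega_conj_bound :
    ∃ C : ℝ, 0 < C ∧ ∀ φ ψ a b : ℝ, 0 < a → a ≤ 1 → 0 < b → b ≤ 1 →
      Real.log (opNormR (omegaMat b ψ * (omegaMat a φ)⁻¹))
        ≤ |Real.log (a / b)|
          + C * Real.log (1 + opNormR (projMat φ - projMat ψ) / (a * b)) := by
  refine ⟨1, one_pos, fun φ ψ a b ha ha1 hb hb1 => ?_⟩
  set c := Real.cos (ψ - φ)
  set s := Real.sin (ψ - φ)
  set m := max (a/b) (b/a) with hm
  have hab : 0 < a * b := mul_pos ha hb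
  have hab1 : a * b ≤ 1 := mul_le_one₀ ha1 (le_of_lt hb) hb1
  have hm1 : 1 ≤ m := by
    rcases le_total a b with h | h
    · exact le_max_of_le_right ((one_le_div ha).mpr h)
    · exact le_max_of_le_left ((one_le_div hb).mpr h)
  have hmpos : 0 < m := lt_of_lt_of_le one_pos hm1
  -- the matrix decomposition
  have hMsplit : omegaMat b ψ * (omegaMat a φ)⁻¹ =
      !![(a/b) * c, 0; 0, (b/a) * c] + !![0, s/(a*b); -((a*b)*s), 0] := by
    rw [M_eq a b φ ψ (ne_of_gt ha) (ne_of_gt hb)]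
    ext i j
    fin_cases i <;> fin_cases j <;>
      simp [Matrix.add_apply, c, s]
  have hcabs : |c| ≤ 1 := Real.abs_cos_le_one _
  have hD : opNormR !![(a/b) * c, 0; 0, (b/a) * c] ≤ m := by
    apply opNormR_diag_le
    · rw [abs_mul, abs_of_pos (div_pos ha hb)]
      calc a/b * |c| ≤ a/b * 1 := by
            exact mul_le_mul_of_nonneg_left hcabs (le_of_lt (div_pos ha hb))
        _ = a/b := mul_one _
        _ ≤ m := le_max_left _ _
    · rw [abs_mul, abs_of_pos (div_pos hb ha)]
      calc b/a * |c| ≤ b/a * 1 := by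
            exact mul_le_mul_of_nonneg_left hcabs (le_of_lt (div_pos hb ha))
        _ = b/a := mul_one _
        _ ≤ m := le_max_right _ _
  have hN : opNormR !![0, s/(a*b); -((a*b)*s), 0] ≤ |s| / (a*b) := by
    apply opNormR_antidiag_le
    · rw [abs_div, abs_of_pos hab]
    · rw [abs_neg, abs_mul, abs_of_pos hab]
      calc (a*b) * |s| ≤ 1 * |s| := mul_le_mul_of_nonneg_right hab1 (abs_nonneg _)
        _ = |s| := one_mul _
        _ ≤ |s| / (a*b) := le_div_self (abs_nonneg _) hab hab1
  have hX : opNormR (omegaMat b ψ * (omegaMat a φ)⁻¹) ≤ m + |s| / (a*b) := by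
    rw [hMsplit]
    exact le_trans (opNormR_add_le _ _) (add_le_add hD hN)
  have hsdiv : 0 ≤ |s| / (a*b) := div_nonneg (abs_nonneg _) (le_of_lt hab)
  have hY : m + |s| / (a*b) ≤ m * (1 + |s| / (a*b)) := by
    rw [mul_add, mul_one]
    have : |s| / (a*b) ≤ m * (|s| / (a*b)) := le_mul_of_one_le_left hsdiv hm1
    linarith
  have hYpos : 0 < m * (1 + |s| / (a*b)) := by positivity
  -- step 1: log X ≤ log (m * (1 + |s|/(ab)))
  have hlog1 : Real.log (opNormR (omegaMat b ψ * (omegaMat a φ)⁻¹))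
      ≤ Real.log (m * (1 + |s| / (a*b))) := by
    rcases eq_or_lt_of_le (norm_nonneg (Matrix.toEuclideanCLM (𝕜 := ℝ) (n := Fin 2)
        (omegaMat b ψ * (omegaMat a φ)⁻¹))) with h0 | h0
    · rw [show opNormR (omegaMat b ψ * (omegaMat a φ)⁻¹) = 0 from h0.symm, Real.log_zero]
      apply Real.log_nonneg
      nlinarith
    · exact Real.log_le_log h0 (le_trans hX hY)
  have hlogm : Real.log m = |Real.log (a/b)| := by
    rcases le_total a b with h | h
    · have h1 : a/b ≤ 1 := (div_le_one hb).mpr h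
      have h2 : m = b/a := by
        rw [hm, max_eq_right]
        calc a/b ≤ 1 := h1
          _ ≤ b/a := (one_le_div ha).mpr h
      have h3 : Real.log (a/b) ≤ 0 := Real.log_nonpos (by positivity) h1
      rw [h2, abs_of_nonpos h3, Real.log_div (ne_of_gt ha) (ne_of_gt hb),
        Real.log_div (ne_of_gt hb) (ne_of_gt ha)]
      ring
    · have h1 : 1 ≤ a/b := (one_le_div hb).mpr h
      have h2 : m = a/b := by
        rw [hm, max_eq_left]
        calc b/a ≤ 1 := (div_le_one ha).mpr h
          _ ≤ a/b := h1
      rw [h2, abs_of_nonneg (Real.log_nonneg h1)]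
  have hlog2 : Real.log (m * (1 + |s| / (a*b)))
      = Real.log m + Real.log (1 + |s| / (a*b)) :=
    Real.log_mul (ne_of_gt hmpos) (by positivity)
  have hlog3 : Real.log (1 + |s| / (a*b))
      ≤ Real.log (1 + opNormR (projMat φ - projMat ψ) / (a*b)) := by
    apply Real.log_le_log (by positivity)
    have h1 : |s| / (a*b) ≤ opNormR (projMat φ - projMat ψ) / (a*b) := by
      gcongr
      exact sin_le_proj_norm φ ψ
    linarith
  calc Real.log (opNormR (omegaMat b ψ * (omegaMat a φ)⁻¹))
      ≤ Real.log m + Real.log (1 + |s| / (a*b)) := by rw [← hlog2]; exact hlog1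
    _ ≤ |Real.log (a/b)| + 1 * Real.log (1 + opNormR (projMat φ - projMat ψ) / (a*b)) := by
        rw [hlogm, one_mul]; exact add_le_add_right hlog3 _
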